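/- arXiv:1307.1437 — 2 statements merged into one kernel-verified Lean document; each statement's English description precedes it below -/
import Mathlib

section
/- Let Ā, Â ∈ ℝ^{m×n} with Ā ≠ 0, and let β ≥ 0. Suppose that for every symmetric X ∈ ℝ^{n×n} that is entrywise nonnegative, positive semidefinite, and satisfies ⟨ĀᵀĀ, X⟩ ≤ 1, one has ⟨(Â−Ā)ᵀ(Â−Ā), X⟩ ≤ β. Then there exists μ ∈ ℝ^{n×n} with all entries nonnegative such that the matrix β·ĀᵀĀ − μ − (Â−Ā)ᵀ(Â−Ā) is positive semidefinite; equivalently, the block matrix [[I_m, Â−Ā], [(Â−Ā)ᵀ, β·ĀᵀĀ − μ]] is symmetric positive semidefinite. -/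
open Matrix

/-- The trace inner product ⟨M,N⟩ = trace(Mᵀ N). -/
def matInner {k : ℕ} (M Nn : Matrix (Fin k) (Fin k) ℝ) : ℝ :=
  Matrix.trace (Mᵀ * Nn)

namespace Stmt17Aux

variable {n : ℕ}

lemma psd_symm_entry {P : Matrix (Fin n) (Fin n) ℝ} (hP : P.PosSemidef) (i j : Fin n) :
    P j i = P i j := by
  have h := congrFun (congrFun hP.1 j) i
  simpa [Matrix.conjTranspose_apply] using h.symm

lemma psd_diag_nonneg {P : Matrix (Fin n) (Fin n) ℝ} (hP : P.PosSemidef) (i : Fin n) :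
    0 ≤ P i i := by
  have := hP.dotProduct_mulVec_nonneg (Pi.single i 1); simpa using this

lemma psd_abs_entry_le {P : Matrix (Fin n) (Fin n) ℝ} (hP : P.PosSemidef) (i j : Fin n) :
    |P i j| ≤ P i i + P j j := by
  rcases eq_or_ne i j with rfl | hij
  · rw [abs_of_nonneg (psd_diag_nonneg hP i)]
    linarith [psd_diag_nonneg hP i]
  · have hsym := psd_symm_entry hP i j
    have h1 := hP.dotProduct_mulVec_nonneg (Pi.single i 1 + Pi.single j 1)
    have h2 := hP.dotProduct_mulVec_nonneg (Pi.single i 1 - Pi.single j 1)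
    simp [dotProduct, Matrix.mulVec, Pi.single_apply, hij, Ne.symm hij,
      Finset.sum_add_distrib, mul_add, add_mul, sub_mul, mul_sub, mul_ite, ite_mul,
      Finset.sum_ite_eq, Finset.sum_ite_eq'] at h1 h2
    rw [abs_le]
    constructor <;> nlinarith [hsym]

lemma psd_vecMulVec (z : Fin n → ℝ) : (Matrix.vecMulVec z z).PosSemidef := by
  apply Matrix.PosSemidef.of_dotProduct_mulVec_nonneg
  · ext i j
    simp [Matrix.conjTranspose_apply, Matrix.vecMulVec_apply, mul_comm]
  · intro x
    have hq : dotProduct (star x) (Matrix.vecMulVec z z *ᵥ x)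
        = (dotProduct z x) ^ 2 := by
      simp only [dotProduct, Matrix.mulVec, Matrix.vecMulVec_apply, star_trivial]
      rw [sq, Finset.sum_mul_sum]
      congr 1; ext i
      rw [Finset.mul_sum]
      exact Finset.sum_congr rfl fun j _ => by ring
    rw [hq]
    positivity

lemma psd_smul {c : ℝ} (hc : 0 ≤ c) {P : Matrix (Fin n) (Fin n) ℝ} (hP : P.PosSemidef) :
    (c • P).PosSemidef := by
  apply Matrix.PosSemidef.of_dotProduct_mulVec_nonneg
  · have : (c • P)ᴴ = c • Pᴴ := by simp [Matrix.conjTranspose_smul]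
    rw [Matrix.IsHermitian, this, hP.1.eq]
  · intro x
    have := hP.dotProduct_mulVec_nonneg x
    simp only [Matrix.smul_mulVec, dotProduct_smul]
    exact smul_nonneg hc this

lemma psd_transpose_mul_self {m : ℕ} (A : Matrix (Fin m) (Fin n) ℝ) :
    (Aᵀ * A).PosSemidef := by
  simpa using Matrix.posSemidef_conjTranspose_mul_self A

lemma smul_isSymm {c : ℝ} {Y : Matrix (Fin n) (Fin n) ℝ} (hY : Y.IsSymm) : (c • Y).IsSymm := by
  rw [Matrix.IsSymm, Matrix.transpose_smul, hY]

lemma matInner_eq_sum (M N : Matrix (Fin n) (Fin n) ℝ) :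
    matInner M N = ∑ p : Fin n × Fin n, M p.1 p.2 * N p.1 p.2 := by
  simp [matInner, Matrix.trace, Matrix.mul_apply, Matrix.diag, Fintype.sum_prod_type]
  rw [Finset.sum_comm]

lemma matInner_smul_right (M Y : Matrix (Fin n) (Fin n) ℝ) (c : ℝ) :
    matInner M (c • Y) = c * matInner M Y := by
  simp [matInner, Matrix.mul_smul, Matrix.trace_smul, smul_eq_mul]

open scoped MatrixOrder in
lemma matInner_nonneg {B Y : Matrix (Fin n) (Fin n) ℝ} (hB : B.PosSemidef) (hY : Y.PosSemidef) :
    0 ≤ matInner B Y := by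
  obtain ⟨W, rfl⟩ : ∃ W : Matrix (Fin n) (Fin n) ℝ, Y = Wᴴ * W :=
    CStarAlgebra.nonneg_iff_eq_star_mul_self.mp hY.nonneg
  unfold matInner
  rw [← Matrix.mul_assoc, Matrix.trace_mul_comm]
  have h : (W * (Bᵀ * Wᴴ)).PosSemidef := by
    have hBt : Bᵀ.PosSemidef := hB.transpose
    have := hBt.mul_mul_conjTranspose_same W
    simpa [Matrix.mul_assoc] using this
  have htr : Matrix.trace (W * (Bᵀ * Wᴴ)) = ∑ i, (W * (Bᵀ * Wᴴ)) i i := by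
    simp [Matrix.trace, Matrix.diag]
  rw [htr]
  exact Finset.sum_nonneg fun i _ => psd_diag_nonneg h i

lemma key {m : ℕ} (Abar Ahat : Matrix (Fin m) (Fin n) ℝ) (β : ℝ) (hβ : 0 ≤ β)
    (hX : ∀ X : Matrix (Fin n) (Fin n) ℝ, X.IsSymm → (∀ i j, 0 ≤ X i j) → X.PosSemidef →
      matInner (Abarᵀ * Abar) X ≤ 1 →
      matInner ((Ahat - Abar)ᵀ * (Ahat - Abar)) X ≤ β)
    (Y : Matrix (Fin n) (Fin n) ℝ) (hs : Y.IsSymm) (hnn : ∀ i j, 0 ≤ Y i j)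
    (hpsd : Y.PosSemidef) :
    matInner ((Ahat - Abar)ᵀ * (Ahat - Abar)) Y ≤ β * matInner (Abarᵀ * Abar) Y := by
  set B := Abarᵀ * Abar with hBdef
  set C := (Ahat - Abar)ᵀ * (Ahat - Abar) with hCdef
  have hB : B.PosSemidef := psd_transpose_mul_self _
  have hC : C.PosSemidef := psd_transpose_mul_self _
  have hc0 : 0 ≤ matInner B Y := matInner_nonneg hB hpsd
  rcases lt_or_eq_of_le hc0 with hpos | heq
  · have hX' := hX ((matInner B Y)⁻¹ • Y) (smul_isSymm hs)
      (fun i j => by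
        have := mul_nonneg (inv_nonneg.mpr hc0) (hnn i j)
        simpa [Matrix.smul_apply, smul_eq_mul] using this)
      (psd_smul (inv_nonneg.mpr hc0) hpsd)
      (by rw [matInner_smul_right, inv_mul_cancel₀ (ne_of_gt hpos)])
    rw [matInner_smul_right] at hX'
    have hmul := mul_le_mul_of_nonneg_left hX' (le_of_lt hpos)
    have hid : matInner B Y * ((matInner B Y)⁻¹ * matInner C Y) = matInner C Y := by
      field_simp
    rw [hid] at hmul
    linarith
  · have hCle : matInner C Y ≤ 0 := by
      by_contra h
      push_neg at h
      set t := (β + 1) / matInner C Y with htdef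
      have ht : 0 < t := div_pos (by linarith) h
      have hX' := hX (t • Y) (smul_isSymm hs)
        (fun i j => by
          have := mul_nonneg (le_of_lt ht) (hnn i j)
          simpa [Matrix.smul_apply, smul_eq_mul] using this)
        (psd_smul (le_of_lt ht) hpsd)
        (by rw [matInner_smul_right, ← heq, mul_zero]; norm_num)
      rw [matInner_smul_right, htdef] at hX'
      rw [div_mul_cancel₀ _ (ne_of_gt h)] at hX'
      linarith
    have hCge : 0 ≤ matInner C Y := matInner_nonneg hC hpsd
    rw [← heq, mul_zero]
    linarith

abbrev E (n : ℕ) := EuclideanSpace ℝ (Fin n × Fin n)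

noncomputable def toE (M : Matrix (Fin n) (Fin n) ℝ) : E n :=
  (WithLp.equiv 2 _).symm fun p => M p.1 p.2

@[simp] lemma toE_apply (M : Matrix (Fin n) (Fin n) ℝ) (p : Fin n × Fin n) :
    toE M p = M p.1 p.2 := rfl

noncomputable def S (n : ℕ) : ConvexCone ℝ (E n) where
  carrier := {x | ∃ P N : Matrix (Fin n) (Fin n) ℝ, P.PosSemidef ∧ N.IsSymm ∧
    (∀ i j, 0 ≤ N i j) ∧ ∀ p : Fin n × Fin n, x p = P p.1 p.2 + N p.1 p.2}
  smul_mem' := by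
    rintro c hc x ⟨P, N, hP, hNs, hNn, hx⟩
    refine ⟨c • P, c • N, psd_smul hc.le hP, smul_isSymm hNs,
      fun i j => by simpa [Matrix.smul_apply, smul_eq_mul] using mul_nonneg hc.le (hNn i j),
      fun p => ?_⟩
    have hcx : (c • x) p = c * x p := rfl
    simp [hcx, hx p, Matrix.smul_apply, smul_eq_mul, mul_add]
  add_mem' := by
    rintro x ⟨P, N, hP, hNs, hNn, hx⟩ y ⟨P', N', hP', hNs', hNn', hy⟩
    refine ⟨P + P', N + N', hP.add hP', hNs.add hNs',
      fun i j => add_nonneg (hNn i j) (hNn' i j), fun p => ?_⟩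
    have hxy : (x + y) p = x p + y p := rfl
    simp [hxy, hx p, hy p, Matrix.add_apply]
    ring

lemma S_zero_mem : (0 : E n) ∈ S n :=
  ⟨0, 0, Matrix.PosSemidef.zero, by simp [Matrix.IsSymm], fun i j => le_refl _, fun p => by simp⟩

lemma abs_coord_le (v : E n) (p : Fin n × Fin n) : |v p| ≤ ‖v‖ := by
  rw [EuclideanSpace.norm_eq]
  have h1 : |v p| = Real.sqrt (‖v p‖ ^ 2) := by
    rw [Real.sqrt_sq (norm_nonneg _)]
    simp [Real.norm_eq_abs]
  rw [h1]
  apply Real.sqrt_le_sqrt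
  exact Finset.single_le_sum (f := fun q => ‖v q‖ ^ 2) (fun q _ => sq_nonneg _)
    (Finset.mem_univ p)

lemma coord_tendsto {x : ℕ → E n} {L : E n}
    (h : Filter.Tendsto x Filter.atTop (nhds L)) (p : Fin n × Fin n) :
    Filter.Tendsto (fun k => x k p) Filter.atTop (nhds (L p)) := by
  have := ((EuclideanSpace.proj (𝕜 := ℝ) p).continuous.tendsto L).comp h
  exact this

lemma isClosed_S : IsClosed ((S n : Set (E n))) := by
  rw [← isSeqClosed_iff_isClosed]
  intro x L hx hL
  choose P N hP hNs hNn hEq using hx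
  obtain ⟨R, hR⟩ : ∃ R : ℝ, ∀ k p, |x k p| ≤ R := by
    obtain ⟨R, hR⟩ := (hL.norm).bddAbove_range
    exact ⟨R, fun k p => (abs_coord_le _ _).trans (hR ⟨k, rfl⟩)⟩
  have hPdiag : ∀ k i, P k i i ≤ R := by
    intro k i
    have h1 := hEq k (i, i)
    have h2 := hNn k i i
    have h3 := (abs_le.mp (hR k (i, i))).2
    simp only at h1
    linarith
  have hPbound : ∀ k (p : Fin n × Fin n), |P k p.1 p.2| ≤ 2 * R := by
    intro k p
    have h1 := psd_abs_entry_le (hP k) p.1 p.2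
    have h2 := hPdiag k p.1
    have h3 := hPdiag k p.2
    linarith
  set Rb : ℝ := Real.sqrt ((Fintype.card (Fin n × Fin n) : ℝ) * (2 * R) ^ 2) with hRb
  have hnorm : ∀ k, ‖toE (P k)‖ ≤ Rb := by
    intro k
    rw [EuclideanSpace.norm_eq, hRb]
    apply Real.sqrt_le_sqrt
    calc ∑ p : Fin n × Fin n, ‖toE (P k) p‖ ^ 2
        ≤ ∑ _p : Fin n × Fin n, (2 * R) ^ 2 := by
          apply Finset.sum_le_sum
          intro p _
          rw [toE_apply, Real.norm_eq_abs]
          have h := hPbound k p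
          nlinarith [abs_nonneg (P k p.1 p.2)]
      _ = (Fintype.card (Fin n × Fin n) : ℝ) * (2 * R) ^ 2 := by
          rw [Finset.sum_const, Finset.card_univ, nsmul_eq_mul]
  obtain ⟨a, -, φ, hφ, ha⟩ := tendsto_subseq_of_bounded (x := fun k => toE (P k))
    (Metric.isBounded_closedBall (x := (0 : E n)) (r := Rb))
    (fun k => mem_closedBall_zero_iff.mpr (hnorm k))
  have hac : ∀ p : Fin n × Fin n,
      Filter.Tendsto (fun k => P (φ k) p.1 p.2) Filter.atTop (nhds (a p)) := by
    intro p
    have := coord_tendsto ha p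
    simpa [Function.comp] using this
  have hLc : ∀ p : Fin n × Fin n,
      Filter.Tendsto (fun k => x (φ k) p) Filter.atTop (nhds (L p)) :=
    fun p => coord_tendsto (hL.comp hφ.tendsto_atTop) p
  have hNc : ∀ p : Fin n × Fin n,
      Filter.Tendsto (fun k => N (φ k) p.1 p.2) Filter.atTop (nhds (L p - a p)) := by
    intro p
    have h := (hLc p).sub (hac p)
    have heq2 : (fun k => x (φ k) p - P (φ k) p.1 p.2) = fun k => N (φ k) p.1 p.2 := by
      funext k; rw [hEq (φ k) p]; ring
    rwa [heq2] at h
  refine ⟨Matrix.of fun i j => a (i, j), Matrix.of fun i j => L (i, j) - a (i, j),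
    Matrix.PosSemidef.of_dotProduct_mulVec_nonneg ?_ ?_, ?_, ?_, ?_⟩
  · ext i j
    simp only [Matrix.conjTranspose_apply, Matrix.of_apply, star_trivial]
    have h1 := hac (j, i)
    have h2 := hac (i, j)
    have h3 : (fun k => P (φ k) j i) = fun k => P (φ k) i j :=
      funext fun k => psd_symm_entry (hP (φ k)) i j
    rw [h3] at h1
    exact tendsto_nhds_unique h1 h2
  · intro z
    have hqt : Filter.Tendsto
        (fun k => dotProduct (star z) (P (φ k) *ᵥ z)) Filter.atTop
        (nhds (dotProduct (star z) ((Matrix.of fun i j => a (i, j)) *ᵥ z))) := by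
      simp only [dotProduct, Matrix.mulVec, Matrix.of_apply]
      apply tendsto_finset_sum
      intro i _
      apply Filter.Tendsto.const_mul
      apply tendsto_finset_sum
      intro j _
      exact (hac (i, j)).mul_const _
    exact ge_of_tendsto' hqt fun k => (hP (φ k)).dotProduct_mulVec_nonneg z
  · ext i j
    simp only [Matrix.transpose_apply, Matrix.of_apply]
    have h1 := hNc (j, i)
    have h2 := hNc (i, j)
    have h3 : (fun k => N (φ k) j i) = fun k => N (φ k) i j := by
      funext k
      have := congrFun (congrFun (hNs (φ k)) i) j
      simpa [Matrix.transpose_apply] using this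
    rw [h3] at h1
    exact tendsto_nhds_unique h1 h2
  · intro i j
    simp only [Matrix.of_apply]
    exact ge_of_tendsto' (hNc (i, j)) fun k => hNn (φ k) i j
  · intro p
    simp only [Matrix.of_apply]
    have e1 : a (p.1, p.2) = a p := by rw [Prod.mk.eta]
    have e2 : L (p.1, p.2) = L p := by rw [Prod.mk.eta]
    rw [e1, e2]
    ring

lemma inner_E (x y : E n) : (inner ℝ x y : ℝ) = ∑ p : Fin n × Fin n, x p * y p := by
  simp [PiLp.inner_apply, RCLike.inner_apply, mul_comm]

theorem exists_decomp {M : Matrix (Fin n) (Fin n) ℝ} (hM : M.IsSymm)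
    (h : ∀ Y : Matrix (Fin n) (Fin n) ℝ, Y.IsSymm → (∀ i j, 0 ≤ Y i j) → Y.PosSemidef →
      0 ≤ matInner M Y) :
    ∃ P N0 : Matrix (Fin n) (Fin n) ℝ, P.PosSemidef ∧ N0.IsSymm ∧ (∀ i j, 0 ≤ N0 i j) ∧
      M = P + N0 := by
  have hswap : ∀ f : Fin n × Fin n → ℝ,
      ∑ p : Fin n × Fin n, f p = ∑ p : Fin n × Fin n, f (p.2, p.1) :=
    fun f => Fintype.sum_equiv (Equiv.prodComm _ _) _ _ (fun p => rfl)
  have hMsym : ∀ i j, M j i = M i j := by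
    intro i j
    have := congrFun (congrFun hM i) j
    simpa [Matrix.transpose_apply] using this
  have hdd : ∀ x : E n, (∀ y : E n, (∀ w ∈ (S n : Set (E n)), 0 ≤ (inner ℝ w y : ℝ)) →
      0 ≤ (inner ℝ y x : ℝ)) → x ∈ (S n : Set (E n)) := by
    intro x hx
    by_contra hx0
    let K : ProperCone ℝ (E n) := ⟨(S n).toPointedCone S_zero_mem, isClosed_S⟩
    obtain ⟨y, hy, hxy⟩ := ProperCone.hyperplane_separation' (C := K) (x₀ := x) hx0
    have := hx y hy
    rw [real_inner_comm] at this
    linarith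
  have hmem : toE M ∈ (S n : Set (E n)) := by
    refine hdd _ fun y hy => ?_
    -- facts from hy
    have hquad : ∀ z : Fin n → ℝ, 0 ≤ ∑ p : Fin n × Fin n, z p.1 * z p.2 * y p := by
      intro z
      have hmem' : toE (Matrix.vecMulVec z z) ∈ (S n : Set (E n)) :=
        ⟨Matrix.vecMulVec z z, 0, psd_vecMulVec z, by simp [Matrix.IsSymm],
          fun i j => le_refl _, fun p => by simp⟩
      have := hy _ hmem'
      rw [inner_E] at this
      simpa [Matrix.vecMulVec_apply] using this
    have hoff : ∀ i j : Fin n, 0 ≤ y (i, j) + y (j, i) := by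
      intro i j
      set N : Matrix (Fin n) (Fin n) ℝ := Matrix.of fun a b =>
        (if (a, b) = (i, j) then (1 : ℝ) else 0) + (if (a, b) = (j, i) then (1 : ℝ) else 0)
        with hNdef
      have hNs : N.IsSymm := by
        ext a b
        simp only [hNdef, Matrix.transpose_apply, Matrix.of_apply, Prod.mk.injEq]
        by_cases h1 : a = i <;> by_cases h2 : a = j <;> by_cases h3 : b = i <;>
          by_cases h4 : b = j <;> simp [h1, h2, h3, h4, and_comm] <;> ring
      have hNn : ∀ a b, 0 ≤ N a b := by
        intro a b
        simp only [hNdef, Matrix.of_apply]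
        positivity
      have hmem' : toE N ∈ (S n : Set (E n)) :=
        ⟨0, N, Matrix.PosSemidef.zero, hNs, hNn, fun p => by simp⟩
      have hin := hy _ hmem'
      rw [inner_E] at hin
      have hsum : ∑ p : Fin n × Fin n, toE N p * y p = y (i, j) + y (j, i) := by
        simp only [toE_apply, hNdef, Matrix.of_apply]
        rcases eq_or_ne (i, j) (j, i) with hd | hd
        · have hij : i = j := (Prod.mk.injEq _ _ _ _).mp hd |>.1
          subst hij
          simp [add_mul, Finset.sum_add_distrib, Finset.sum_ite_eq']
        · simp [add_mul, Finset.sum_add_distrib, Finset.sum_ite_eq', Prod.mk.eta]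
      rw [hsum] at hin
      exact hin
    -- symmetrized matrix
    set Ys : Matrix (Fin n) (Fin n) ℝ :=
      Matrix.of fun i j => (y (i, j) + y (j, i)) / 2 with hYdef
    have hYs : Ys.IsSymm := by
      ext i j
      simp only [hYdef, Matrix.transpose_apply, Matrix.of_apply]
      ring
    have hYn : ∀ i j, 0 ≤ Ys i j := by
      intro i j
      simp only [hYdef, Matrix.of_apply]
      linarith [hoff i j]
    have hform : ∀ (W : Matrix (Fin n) (Fin n) ℝ) (z : Fin n → ℝ),
        dotProduct (star z) (W *ᵥ z)
          = ∑ p : Fin n × Fin n, z p.1 * z p.2 * W p.1 p.2 := by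
      intro W z
      simp only [dotProduct, Matrix.mulVec, star_trivial, Fintype.sum_prod_type]
      refine Finset.sum_congr rfl fun i _ => ?_
      rw [Finset.mul_sum]
      exact Finset.sum_congr rfl fun j _ => by ring
    have hYpsd : Ys.PosSemidef := by
      apply Matrix.PosSemidef.of_dotProduct_mulVec_nonneg
      · rw [Matrix.IsHermitian]
        ext i j
        simp only [Matrix.conjTranspose_apply, hYdef, Matrix.of_apply, star_trivial]
        ring
      · intro z
        rw [hform]
        have step1 : ∑ p : Fin n × Fin n, z p.1 * z p.2 * Ys p.1 p.2
            = ∑ p : Fin n × Fin n, ((z p.1 * z p.2 * y p) / 2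
                + (z p.1 * z p.2 * y (p.2, p.1)) / 2) :=
          Finset.sum_congr rfl fun p _ => by
            simp only [hYdef, Matrix.of_apply, Prod.mk.eta]; ring
        have step2 : ∑ p : Fin n × Fin n, z p.1 * z p.2 * y (p.2, p.1)
            = ∑ p : Fin n × Fin n, z p.1 * z p.2 * y p := by
          rw [hswap (fun p => z p.1 * z p.2 * y (p.2, p.1))]
          exact Finset.sum_congr rfl fun p _ => by
            simp only [Prod.mk.eta]; ring
        have hcalc : ∑ p : Fin n × Fin n, z p.1 * z p.2 * Ys p.1 p.2
            = ∑ p : Fin n × Fin n, z p.1 * z p.2 * y p := by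
          rw [step1, Finset.sum_add_distrib, ← Finset.sum_div, ← Finset.sum_div, step2]
          ring
        rw [hcalc]
        exact hquad z
    -- conclude
    have hMY := h Ys hYs hYn hYpsd
    rw [matInner_eq_sum] at hMY
    have step1 : ∑ p : Fin n × Fin n, M p.1 p.2 * Ys p.1 p.2
        = ∑ p : Fin n × Fin n, ((M p.1 p.2 * y p) / 2 + (M p.1 p.2 * y (p.2, p.1)) / 2) :=
      Finset.sum_congr rfl fun p _ => by
        simp only [hYdef, Matrix.of_apply, Prod.mk.eta]; ring
    have step2 : ∑ p : Fin n × Fin n, M p.1 p.2 * y (p.2, p.1)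
        = ∑ p : Fin n × Fin n, M p.1 p.2 * y p := by
      rw [hswap (fun p => M p.1 p.2 * y (p.2, p.1))]
      exact Finset.sum_congr rfl fun p _ => by
        simp only [Prod.mk.eta]
        rw [hMsym p.1 p.2]
    have hcomm : ∑ p : Fin n × Fin n, y p * toE M p
        = ∑ p : Fin n × Fin n, M p.1 p.2 * y p :=
      Finset.sum_congr rfl fun p _ => by rw [toE_apply, mul_comm]
    have hfinal : (inner ℝ y (toE M) : ℝ) = ∑ p : Fin n × Fin n, M p.1 p.2 * Ys p.1 p.2 := by
      rw [inner_E, hcomm, step1, Finset.sum_add_distrib, ← Finset.sum_div, ← Finset.sum_div,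
        step2]
      ring
    rw [hfinal]
    exact hMY
  obtain ⟨P, N0, hP, hNs, hNn, hEq⟩ := hmem
  refine ⟨P, N0, hP, hNs, hNn, ?_⟩
  ext i j
  have := hEq (i, j)
  simpa using this

end Stmt17Aux

open Stmt17Aux in
theorem stmt17 {m n : ℕ} (Abar Ahat : Matrix (Fin m) (Fin n) ℝ) (hA : Abar ≠ 0)
    (β : ℝ) (hβ : 0 ≤ β)
    (hX : ∀ X : Matrix (Fin n) (Fin n) ℝ, X.IsSymm → (∀ i j, 0 ≤ X i j) → X.PosSemidef →
      matInner (Abarᵀ * Abar) X ≤ 1 →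
      matInner ((Ahat - Abar)ᵀ * (Ahat - Abar)) X ≤ β) :
    ∃ μ : Matrix (Fin n) (Fin n) ℝ, (∀ i j, 0 ≤ μ i j) ∧
      (β • (Abarᵀ * Abar) - μ - (Ahat - Abar)ᵀ * (Ahat - Abar)).PosSemidef ∧
      (Matrix.fromBlocks (1 : Matrix (Fin m) (Fin m) ℝ) (Ahat - Abar)
        (Ahat - Abar)ᵀ (β • (Abarᵀ * Abar) - μ)).PosSemidef := by
  set B := Abarᵀ * Abar with hBdef
  set C := (Ahat - Abar)ᵀ * (Ahat - Abar) with hCdef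
  have hMsym : (β • B - C).IsSymm := by
    rw [Matrix.IsSymm, Matrix.transpose_sub, Matrix.transpose_smul, hBdef, hCdef,
      Matrix.transpose_mul, Matrix.transpose_transpose, Matrix.transpose_mul,
      Matrix.transpose_transpose]
  have hexp : ∀ Y, matInner (β • B - C) Y = β * matInner B Y - matInner C Y := by
    intro Y
    unfold matInner
    rw [Matrix.transpose_sub, Matrix.transpose_smul, Matrix.sub_mul, Matrix.smul_mul,
      Matrix.trace_sub, Matrix.trace_smul, smul_eq_mul]
  obtain ⟨P, μ, hP, hμs, hμn, hPN⟩ := exists_decomp hMsym (fun Y hs hnn hpsd => by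
    rw [hexp Y]
    have := key Abar Ahat β hβ hX Y hs hnn hpsd
    linarith)
  have hkey : β • B - μ - C = P := by
    have : β • B - C = P + μ := hPN
    calc β • B - μ - C = (β • B - C) - μ := by abel
      _ = (P + μ) - μ := by rw [this]
      _ = P := by abel
  refine ⟨μ, hμn, by rw [hkey]; exact hP, ?_⟩
  have hone : (1 : Matrix (Fin m) (Fin m) ℝ).PosDef := Matrix.PosDef.one
  haveI : Invertible (1 : Matrix (Fin m) (Fin m) ℝ) := invertibleOne
  rw [show (Ahat - Abar)ᵀ = (Ahat - Abar)ᴴ from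
    (Matrix.conjTranspose_eq_transpose_of_trivial _).symm]
  rw [Matrix.PosDef.fromBlocks₁₁ (Ahat - Abar) (β • B - μ) hone]
  have hio : (1 : Matrix (Fin m) (Fin m) ℝ)⁻¹ = 1 := Matrix.inv_eq_left_inv (by simp)
  rw [hio, Matrix.mul_one]
  have hCC : β • B - μ - (Ahat - Abar)ᴴ * (Ahat - Abar) = β • B - μ - C := by
    rw [hCdef, Matrix.conjTranspose_eq_transpose_of_trivial]
  rw [hCC, hkey]
  exact hP
end

section
/- Let u, u' ∈ ℝⁿ be unit vectors with ‖u − u'‖₂ ≤ √2. Then: (i) for every r ∈ [0,1], ‖r·u + (1−r)·u'‖₂ ≥ 1/√2 (in particular r·u + (1−r)·u' ≠ 0); and (ii) defining ū(r) = (r·u + (1−r)·u') / ‖r·u + (1−r)·u'‖₂ for r ∈ [0,1], for all r₁, r₂ ∈ [0,1] one has ‖ū(r₁) − ū(r₂)‖₂ ≤ 2√2 · ‖u − u'‖₂ · |r₁ − r₂|. -/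
open scoped RealInnerProductSpace

lemma aux_norm19 {E : Type*} [NormedAddCommGroup E] [NormedSpace ℝ E]
    (a b : E) (ha : a ≠ 0) (hb : b ≠ 0) :
    ‖‖a‖⁻¹ • a - ‖b‖⁻¹ • b‖ ≤ 2 * ‖a - b‖ / ‖a‖ := by
  have hna : (0:ℝ) < ‖a‖ := norm_pos_iff.2 ha
  have hnb : (0:ℝ) < ‖b‖ := norm_pos_iff.2 hb
  have key : ‖a‖⁻¹ • a - ‖b‖⁻¹ • b = ‖a‖⁻¹ • (a - b) + (‖a‖⁻¹ - ‖b‖⁻¹) • b := by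
    rw [smul_sub, sub_smul]; abel
  rw [key]
  have habs : |‖a‖⁻¹ - ‖b‖⁻¹| ≤ ‖a - b‖ / (‖a‖ * ‖b‖) := by
    have h1 : ‖a‖⁻¹ - ‖b‖⁻¹ = (‖b‖ - ‖a‖) / (‖a‖ * ‖b‖) := by field_simp
    rw [h1, abs_div, abs_of_pos (by positivity : (0:ℝ) < ‖a‖ * ‖b‖)]
    gcongr
    calc |‖b‖ - ‖a‖| ≤ ‖b - a‖ := abs_norm_sub_norm_le b a
    _ = ‖a - b‖ := norm_sub_rev b a
  calc ‖‖a‖⁻¹ • (a - b) + (‖a‖⁻¹ - ‖b‖⁻¹) • b‖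
      ≤ ‖‖a‖⁻¹ • (a - b)‖ + ‖(‖a‖⁻¹ - ‖b‖⁻¹) • b‖ := norm_add_le _ _
    _ = ‖a‖⁻¹ * ‖a - b‖ + |‖a‖⁻¹ - ‖b‖⁻¹| * ‖b‖ := by
        rw [norm_smul, norm_smul, Real.norm_eq_abs, Real.norm_eq_abs,
          abs_of_pos (inv_pos.2 hna)]
    _ ≤ ‖a‖⁻¹ * ‖a - b‖ + (‖a - b‖ / (‖a‖ * ‖b‖)) * ‖b‖ := by gcongr
    _ = 2 * ‖a - b‖ / ‖a‖ := by field_simp; ring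

theorem stmt19 {n : ℕ} (u u' : EuclideanSpace ℝ (Fin n))
    (hu : ‖u‖ = 1) (hu' : ‖u'‖ = 1) (hd : ‖u - u'‖ ≤ Real.sqrt 2) :
    (∀ r : ℝ, r ∈ Set.Icc (0 : ℝ) 1 →
      1 / Real.sqrt 2 ≤ ‖r • u + (1 - r) • u'‖ ∧ r • u + (1 - r) • u' ≠ 0) ∧
    (∀ r₁ r₂ : ℝ, r₁ ∈ Set.Icc (0 : ℝ) 1 → r₂ ∈ Set.Icc (0 : ℝ) 1 →
      ‖‖r₁ • u + (1 - r₁) • u'‖⁻¹ • (r₁ • u + (1 - r₁) • u')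
          - ‖r₂ • u + (1 - r₂) • u'‖⁻¹ • (r₂ • u + (1 - r₂) • u')‖
        ≤ 2 * Real.sqrt 2 * ‖u - u'‖ * |r₁ - r₂|) := by
  have hinner : (0:ℝ) ≤ ⟪u, u'⟫ := by
    have h2 : ‖u - u'‖ ^ 2 ≤ 2 := by
      calc ‖u - u'‖ ^ 2 ≤ (Real.sqrt 2) ^ 2 := by gcongr
      _ = 2 := Real.sq_sqrt (by norm_num)
    have h3 : ‖u - u'‖ ^ 2 = 2 - 2 * ⟪u, u'⟫ := by
      rw [@norm_sub_sq_real, hu, hu']; ring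
    linarith
  have hlb : ∀ r : ℝ, r ∈ Set.Icc (0:ℝ) 1 →
      1 / Real.sqrt 2 ≤ ‖r • u + (1 - r) • u'‖ := by
    intro r hr
    obtain ⟨hr0, hr1⟩ := hr
    have hsq : ‖r • u + (1 - r) • u'‖ ^ 2 = r^2 + 2 * (r * (1-r) * ⟪u, u'⟫) + (1-r)^2 := by
      rw [@norm_add_sq_real, norm_smul, norm_smul, real_inner_smul_left,
        real_inner_smul_right, hu, hu', Real.norm_eq_abs, Real.norm_eq_abs,
        abs_of_nonneg hr0, abs_of_nonneg (by linarith : (0:ℝ) ≤ 1 - r)]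
      ring
    have hge : (1/2 : ℝ) ≤ ‖r • u + (1 - r) • u'‖ ^ 2 := by
      rw [hsq]
      have h1 : 0 ≤ r * (1-r) * ⟪u, u'⟫ := by
        apply mul_nonneg _ hinner
        nlinarith
      nlinarith [sq_nonneg (2*r - 1)]
    have h := Real.sqrt_le_sqrt hge
    rw [Real.sqrt_sq (norm_nonneg _)] at h
    calc 1 / Real.sqrt 2 = Real.sqrt (1/2) := by
          rw [show (1/2:ℝ) = 2⁻¹ by norm_num, Real.sqrt_inv, one_div]
    _ ≤ ‖r • u + (1 - r) • u'‖ := h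
  have hpos : (0:ℝ) < 1 / Real.sqrt 2 := by positivity
  constructor
  · intro r hr
    refine ⟨hlb r hr, fun h0 => ?_⟩
    have := hlb r hr
    rw [h0, norm_zero] at this
    linarith
  · intro r₁ r₂ h₁ h₂
    set a := r₁ • u + (1 - r₁) • u' with ha_def
    set b := r₂ • u + (1 - r₂) • u' with hb_def
    have hla : 1 / Real.sqrt 2 ≤ ‖a‖ := hlb r₁ h₁
    have hlb2 : 1 / Real.sqrt 2 ≤ ‖b‖ := hlb r₂ h₂
    have ha : a ≠ 0 := by
      intro h0; rw [h0, norm_zero] at hla; linarith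
    have hb : b ≠ 0 := by
      intro h0; rw [h0, norm_zero] at hlb2; linarith
    have hab : a - b = (r₁ - r₂) • (u - u') := by
      rw [ha_def, hb_def]
      module
    have hnab : ‖a - b‖ = |r₁ - r₂| * ‖u - u'‖ := by
      rw [hab, norm_smul, Real.norm_eq_abs]
    have hinv : ‖a‖⁻¹ ≤ Real.sqrt 2 := by
      rw [inv_le_comm₀ (by linarith) (Real.sqrt_pos.2 (by norm_num))]
      rw [inv_eq_one_div]
      exact hla
    calc ‖‖a‖⁻¹ • a - ‖b‖⁻¹ • b‖ ≤ 2 * ‖a - b‖ / ‖a‖ := aux_norm19 a b ha hb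
    _ = 2 * ‖a - b‖ * ‖a‖⁻¹ := by ring
    _ ≤ 2 * ‖a - b‖ * Real.sqrt 2 := by gcongr
    _ = 2 * Real.sqrt 2 * ‖u - u'‖ * |r₁ - r₂| := by rw [hnab]; ring
end
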